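/- Let $(J,F)$ be an abelian balanced Hermitian structure on a $2n$-dimensional unimodular Lie algebra. Then the Bismut curvature $2$-forms satisfy $\sum_{k=1}^n \Omega^{2k-1}_{2k}=0$, where $\Omega^i_j=d\sigma^i_j+\sum_{k=1}^{2n}\sigma^i_k\wedge\sigma^k_j$ and $\sigma^i_j=-\sum_k c^k_{ij}e^k$ in an adapted basis. -/

import Mathlib

/-- For an abelian balanced Hermitian structure `(J, F)` on a `2n`-dimensional
unimodular Lie algebra with adapted orthonormal basis (indexed by `Fin n × Bool`,
`(k, false) ↦ e_{2k-1}`, `(k, true) ↦ e_{2k}`), the Bismut curvature 2-forms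
`Ω^i_j = dσ^i_j + ∑ₖ σ^i_k ∧ σ^k_j`, where `σ^i_j = -∑ₖ c^k_{ij} e^k`, satisfy
`∑ₖ Ω^{2k-1}_{2k} = 0`. -/
theorem bismut_curvature_trace_zero {L : Type*} [LieRing L] [LieAlgebra ℝ L]
    [Module.Finite ℝ L] (n : ℕ)
    (hunimod : ∀ X : L, LinearMap.trace ℝ L (LieAlgebra.ad ℝ L X) = 0)
    (g : L →ₗ[ℝ] L →ₗ[ℝ] ℝ) (hsymm : ∀ x y, g x y = g y x)
    (J : L →ₗ[ℝ] L) (hJ2 : ∀ x, J (J x) = -x)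
    (hab : ∀ x y : L, ⁅J x, J y⁆ = ⁅x, y⁆)
    (hcomp : ∀ x y, g (J x) (J y) = g x y)
    (b : Module.Basis (Fin n × Bool) ℝ L)
    (hadapt : ∀ k : Fin n, J (b (k, false)) = -b (k, true))
    (honb : ∀ i j, g (b i) (b j) = if i = j then (1 : ℝ) else 0)
    -- the balanced condition
    (hbal : ∑ i : Fin n × Bool, ⁅J (b i), b i⁆ = 0)
    -- the Bismut connection 1-forms `σ^i_j = -∑ₖ c^k_{ij} e^k`
    (σ : Fin n × Bool → Fin n × Bool → Module.Dual ℝ L)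
    (hσ : ∀ i j, σ i j = ∑ k : Fin n × Bool, b.coord k ⁅b i, b j⁆ • b.coord k)
    -- the curvature 2-forms `Ω^i_j = dσ^i_j + ∑ₖ σ^i_k ∧ σ^k_j`
    (Ω : Fin n × Bool → Fin n × Bool → L → L → ℝ)
    (hΩ : ∀ i j X Y, Ω i j X Y =
      -σ i j ⁅X, Y⁆ + ∑ k : Fin n × Bool, (σ i k X * σ k j Y - σ i k Y * σ k j X)) :
    ∀ X Y : L, ∑ k : Fin n, Ω (k, false) (k, true) X Y = 0 := by
  have hJt : ∀ k : Fin n, J (b (k, true)) = b (k, false) := by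
    intro k
    have h := hJ2 (b (k, false))
    rw [hadapt, map_neg] at h
    exact neg_injective h
  have hsum0 : ∑ k : Fin n, ⁅b (k, false), b (k, true)⁆ = 0 := by
    have h := hbal
    rw [Fintype.sum_prod_type] at h
    simp only [Fintype.sum_bool, hJt, hadapt, neg_lie, lie_skew] at h
    rw [Finset.sum_add_distrib] at h
    have h2 : (2 : ℝ) • ∑ k : Fin n, ⁅b (k, false), b (k, true)⁆ = 0 := by
      rw [two_smul]; exact h
    rcases smul_eq_zero.mp h2 with h3 | h3
    · norm_num at h3
    · exact h3
  have hbQ : ∀ i j : Fin n, ⁅b (i, false), b (j, true)⁆ = ⁅b (j, false), b (i, true)⁆ := by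
    intro i j
    have h := hab (b (i, false)) (b (j, true))
    rw [hadapt, hJt, neg_lie, lie_skew] at h
    exact h.symm
  have hbP : ∀ i j : Fin n, ⁅b (i, true), b (j, true)⁆ = ⁅b (i, false), b (j, false)⁆ := by
    intro i j
    have h := hab (b (i, false)) (b (j, false))
    rw [hadapt, hadapt, neg_lie, lie_neg, neg_neg] at h
    exact h
  have hσeq : ∀ i j i' j' : Fin n × Bool,
      ⁅b i, b j⁆ = ⁅b i', b j'⁆ → σ i j = σ i' j' := by
    intro i j i' j' h; rw [hσ, hσ, h]
  have hσneg : ∀ i j i' j' : Fin n × Bool,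
      ⁅b i, b j⁆ = -⁅b i', b j'⁆ → σ i j = -σ i' j' := by
    intro i j i' j' h
    rw [hσ, hσ, h, ← Finset.sum_neg_distrib]
    refine Finset.sum_congr rfl fun x _ => ?_
    rw [map_neg]; exact neg_smul ((b.coord x) ⁅b i', b j'⁆) (b.coord x)
  have hσ1 : ∀ m k : Fin n, σ (m, false) (k, true) = σ (k, false) (m, true) := fun m k =>
    hσeq _ _ _ _ (hbQ m k)
  have hσ2 : ∀ m k : Fin n, σ (m, true) (k, true) = -σ (k, false) (m, false) := fun m k =>
    hσneg _ _ _ _ (by rw [hbP]; rw [← lie_skew])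
  have hσ3 : ∀ m k : Fin n, σ (m, false) (k, false) = -σ (k, false) (m, false) := fun m k =>
    hσneg _ _ _ _ (by rw [← lie_skew])
  intro X Y
  simp only [hΩ]
  rw [Finset.sum_add_distrib]
  have h1 : ∑ k : Fin n, -σ (k, false) (k, true) ⁅X, Y⁆ = 0 := by
    rw [Finset.sum_neg_distrib, neg_eq_zero]
    simp only [hσ, LinearMap.sum_apply, LinearMap.smul_apply, smul_eq_mul]
    rw [Finset.sum_comm]
    refine Finset.sum_eq_zero fun m _ => ?_
    rw [← Finset.sum_mul, ← map_sum, hsum0, map_zero, zero_mul]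
  have h2 : ∑ k : Fin n, ∑ m : Fin n × Bool,
      (σ (k, false) m X * σ m (k, true) Y - σ (k, false) m Y * σ m (k, true) X) = 0 := by
    simp only [Fintype.sum_prod_type, Fintype.sum_bool]
    have key : ∀ k m : Fin n,
        (σ (k, false) (m, true) X * σ (m, true) (k, true) Y -
          σ (k, false) (m, true) Y * σ (m, true) (k, true) X) +
        (σ (k, false) (m, false) X * σ (m, false) (k, true) Y -
          σ (k, false) (m, false) Y * σ (m, false) (k, true) X) =
        2 * (σ (k, false) (m, false) X * σ (k, false) (m, true) Y -
          σ (k, false) (m, false) Y * σ (k, false) (m, true) X) := by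
      intro k m
      rw [hσ2 m k, hσ1 m k]
      simp only [LinearMap.neg_apply]
      ring
    trans (∑ k : Fin n, ∑ m : Fin n,
        2 * (σ (k, false) (m, false) X * σ (k, false) (m, true) Y -
          σ (k, false) (m, false) Y * σ (k, false) (m, true) X))
    · exact Finset.sum_congr rfl fun k _ => Finset.sum_congr rfl fun m _ => key k m
    · simp only [← Finset.mul_sum]
      have hTT : (∑ k : Fin n, ∑ m : Fin n,
          (σ (k, false) (m, false) X * σ (k, false) (m, true) Y -
            σ (k, false) (m, false) Y * σ (k, false) (m, true) X)) =
          -(∑ k : Fin n, ∑ m : Fin n,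
          (σ (k, false) (m, false) X * σ (k, false) (m, true) Y -
            σ (k, false) (m, false) Y * σ (k, false) (m, true) X)) := by
        nth_rewrite 1 [Finset.sum_comm]
        rw [← Finset.sum_neg_distrib]
        refine Finset.sum_congr rfl fun a _ => ?_
        rw [← Finset.sum_neg_distrib]
        refine Finset.sum_congr rfl fun c _ => ?_
        rw [hσ3 c a, hσ1 c a]
        simp only [LinearMap.neg_apply]
        ring
      have hT0 : (∑ k : Fin n, ∑ m : Fin n,
          (σ (k, false) (m, false) X * σ (k, false) (m, true) Y -
            σ (k, false) (m, false) Y * σ (k, false) (m, true) X)) = 0 := by linarith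
      rw [hT0, mul_zero]
  rw [h1, h2, add_zero]
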